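/- For every integer l ≥ 0 there exists a unique family (φ_α), indexed by the multi-indices α ∈ ℕ² with |α| ≤ l, of polynomial functions ℝ² → ℝ with deg φ_α ≤ |α|, such that (1/|K|) ∫_K D^γ φ_α dx = δ_{αγ} for all multi-indices α, γ with |α| ≤ l and |γ| ≤ l. -/

import Mathlib

noncomputable section
open MeasureTheory

namespace PaperStmt

/-- First partial derivative `∂/∂x₁`. -/
def pd1 (f : ℝ × ℝ → ℝ) : ℝ × ℝ → ℝ := fun x => fderiv ℝ f x (1, 0)

/-- Second partial derivative `∂/∂x₂`. -/
def pd2 (f : ℝ × ℝ → ℝ) : ℝ × ℝ → ℝ := fun x => fderiv ℝ f x (0, 1)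

/-- Multi-index derivative `D^α = ∂^{|α|}/∂x₁^{α₁}∂x₂^{α₂}`. -/
def Dmulti (α : ℕ × ℕ) (f : ℝ × ℝ → ℝ) : ℝ × ℝ → ℝ := (pd1)^[α.1] ((pd2)^[α.2] f)

/-- `f : ℝ² → ℝ` is a polynomial function of (total) degree at most `l`. -/
def IsPolyFun (l : ℕ) (f : ℝ × ℝ → ℝ) : Prop :=
  ∃ q : MvPolynomial (Fin 2) ℝ, q.totalDegree ≤ l ∧
    ∀ x : ℝ × ℝ, f x = MvPolynomial.eval ![x.1, x.2] q

end PaperStmt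

namespace DualBasisAux
open MvPolynomial PaperStmt

/-! ### Pairs vs `Fin 2 →₀ ℕ` -/

def tf (β : ℕ × ℕ) : Fin 2 →₀ ℕ := Finsupp.single 0 β.1 + Finsupp.single 1 β.2

@[simp] lemma tf_apply0 (β : ℕ × ℕ) : tf β 0 = β.1 := by
  simp [tf, Finsupp.single_apply]

@[simp] lemma tf_apply1 (β : ℕ × ℕ) : tf β 1 = β.2 := by
  simp [tf, Finsupp.single_apply]

lemma tf_surj (d : Fin 2 →₀ ℕ) : tf (d 0, d 1) = d := by
  ext i
  fin_cases i <;> simp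

lemma tf_inj : Function.Injective tf := by
  intro a b h
  have h0 := congrArg (fun d : Fin 2 →₀ ℕ => d 0) h
  have h1 := congrArg (fun d : Fin 2 →₀ ℕ => d 1) h
  simp only [tf_apply0, tf_apply1] at h0 h1
  exact Prod.ext h0 h1

lemma tf_sum (β : ℕ × ℕ) : (tf β).sum (fun _ e => e) = β.1 + β.2 := by
  rw [tf, Finsupp.sum_add_index' (fun _ => rfl) (fun _ _ _ => rfl)]
  simp [Finsupp.sum_single_index]

lemma sum_eq (d : Fin 2 →₀ ℕ) : d.sum (fun _ e => e) = d 0 + d 1 := by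
  conv_lhs => rw [← tf_surj d]
  exact tf_sum _

/-! ### Partial derivative coefficient computations -/

lemma coeff_pderiv (i : Fin 2) (d : Fin 2 →₀ ℕ) (p : MvPolynomial (Fin 2) ℝ) :
    coeff d (pderiv i p) = coeff (d + Finsupp.single i 1) p * (d i + 1) := by
  induction p using MvPolynomial.induction_on' with
  | add p q hp hq => simp [map_add, hp, hq, add_mul]
  | monomial s a =>
    rw [pderiv_monomial]
    rcases Nat.eq_zero_or_pos (s i) with h0 | hpos
    · have hs : s - Finsupp.single i 1 = s := by
        ext j
        rcases eq_or_ne j i with rfl | hj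
        · simp [h0]
        · simp [Finsupp.single_apply, hj.symm]
      have hne : s ≠ d + Finsupp.single i 1 := by
        intro h
        have := congrArg (fun t : Fin 2 →₀ ℕ => t i) h
        simp [h0] at this
      rw [hs]
      simp [coeff_monomial, hne, h0]
    · have hle : Finsupp.single i 1 ≤ s := by
        rw [Finsupp.single_le_iff]; omega
      have hiff : s - Finsupp.single i 1 = d ↔ s = d + Finsupp.single i 1 := by
        constructor
        · intro h; rw [← h, tsub_add_cancel_of_le hle]
        · intro h; rw [h, add_tsub_cancel_right]
      simp only [coeff_monomial]
      by_cases h : s - Finsupp.single i 1 = d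
      · rw [if_pos h, if_pos (hiff.mp h)]
        have : s i = d i + 1 := by
          rw [hiff.mp h]; simp
        rw [this]; push_cast; ring
      · rw [if_neg h, if_neg (fun hh => h (hiff.mpr hh))]
        ring

lemma pderiv_comm' (i j : Fin 2) (p : MvPolynomial (Fin 2) ℝ) :
    pderiv i (pderiv j p) = pderiv j (pderiv i p) := by
  apply MvPolynomial.ext
  intro d
  simp only [coeff_pderiv]
  have : d + Finsupp.single i 1 + Finsupp.single j 1
      = d + Finsupp.single j 1 + Finsupp.single i 1 := by abel
  rw [this]
  rcases eq_or_ne i j with rfl | hij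
  · ring
  · have h1 : (d + Finsupp.single j 1 : Fin 2 →₀ ℕ) i = d i := by
      simp [Finsupp.single_apply, hij.symm]
    have h2 : (d + Finsupp.single i 1 : Fin 2 →₀ ℕ) j = d j := by
      simp [Finsupp.single_apply, hij]
    rw [h1, h2]; ring

lemma eq_C_of_pderiv_zero {p : MvPolynomial (Fin 2) ℝ}
    (h0 : pderiv 0 p = 0) (h1 : pderiv 1 p = 0) : p = C (coeff 0 p) := by
  apply MvPolynomial.ext
  intro d
  rcases eq_or_ne d 0 with rfl | hd
  · simp
  · rw [coeff_C, if_neg (fun h => hd h.symm)]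
    have : ∃ i : Fin 2, d i ≠ 0 := by
      by_contra h
      push_neg at h
      exact hd (Finsupp.ext fun i => h i)
    obtain ⟨i, hi⟩ := this
    have hz : pderiv i p = 0 := by fin_cases i <;> assumption
    have hcp := coeff_pderiv i (d - Finsupp.single i 1) p
    rw [hz] at hcp
    have hle : Finsupp.single i 1 ≤ d := by rw [Finsupp.single_le_iff]; omega
    rw [tsub_add_cancel_of_le hle] at hcp
    have hdi : (d - Finsupp.single i 1 : Fin 2 →₀ ℕ) i = d i - 1 := by simp
    rw [hdi] at hcp
    have hne : ((d i - 1 : ℕ) : ℝ) + 1 ≠ 0 := by positivity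
    have := hcp.symm
    simp only [coeff_zero] at this
    exact (mul_eq_zero.mp this).resolve_right hne

lemma totalDegree_pderiv_le (i : Fin 2) (p : MvPolynomial (Fin 2) ℝ) {m : ℕ}
    (h : p.totalDegree ≤ m + 1) : (pderiv i p).totalDegree ≤ m := by
  rw [totalDegree]
  apply Finset.sup_le
  intro d hd
  rw [mem_support_iff, coeff_pderiv] at hd
  have hc : coeff (d + Finsupp.single i 1) p ≠ 0 := by
    intro hx; rw [hx] at hd; simp at hd
  have := le_totalDegree (mem_support_iff.mpr hc)
  have hsum : (d + Finsupp.single i 1).sum (fun _ e => e) =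
      d.sum (fun _ e => e) + 1 := by
    rw [Finsupp.sum_add_index' (fun _ => rfl) (fun _ _ _ => rfl)]
    simp
  omega

lemma eq_C_of_totalDegree_zero {p : MvPolynomial (Fin 2) ℝ}
    (h : p.totalDegree = 0) : p = C (coeff 0 p) := by
  have hs := (totalDegree_eq_zero_iff _ p).mp h
  apply MvPolynomial.ext
  intro d
  rcases eq_or_ne d 0 with rfl | hd
  · simp
  · rw [coeff_C, if_neg (fun hh => hd hh.symm)]
    by_contra hc
    have hmem : d ∈ p.support := mem_support_iff.mpr hc
    exact hd (Finsupp.ext fun i => hs d hmem i)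

/-! ### Iterated derivatives -/

def Dp (γ : ℕ × ℕ) (p : MvPolynomial (Fin 2) ℝ) : MvPolynomial (Fin 2) ℝ :=
  (pderiv 0)^[γ.1] ((pderiv 1)^[γ.2] p)

lemma iter_add (i : Fin 2) (n : ℕ) (p q : MvPolynomial (Fin 2) ℝ) :
    (pderiv i)^[n] (p + q) = (pderiv i)^[n] p + (pderiv i)^[n] q := by
  induction n generalizing p q with
  | zero => rfl
  | succ n ih => simp [Function.iterate_succ_apply, map_add, ih]

lemma iter_smul (i : Fin 2) (n : ℕ) (r : ℝ) (p : MvPolynomial (Fin 2) ℝ) :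
    (pderiv i)^[n] (r • p) = r • (pderiv i)^[n] p := by
  induction n generalizing p with
  | zero => rfl
  | succ n ih =>
    rw [Function.iterate_succ_apply, Function.iterate_succ_apply]
    rw [show pderiv i (r • p) = r • pderiv i p from by simp, ih]

lemma iter_zero (i : Fin 2) (n : ℕ) :
    (pderiv i)^[n] (0 : MvPolynomial (Fin 2) ℝ) = 0 :=
  Function.iterate_fixed (by simp) n

lemma Dp_add (γ : ℕ × ℕ) (p q : MvPolynomial (Fin 2) ℝ) :
    Dp γ (p + q) = Dp γ p + Dp γ q := by
  unfold Dp; rw [iter_add, iter_add]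

lemma Dp_smul (γ : ℕ × ℕ) (r : ℝ) (p : MvPolynomial (Fin 2) ℝ) :
    Dp γ (r • p) = r • Dp γ p := by
  unfold Dp; rw [iter_smul, iter_smul]

lemma iter_deg (i : Fin 2) (n : ℕ) (p : MvPolynomial (Fin 2) ℝ) (m : ℕ)
    (h : p.totalDegree ≤ n + m) : ((pderiv i)^[n] p).totalDegree ≤ m := by
  induction n generalizing p with
  | zero => simpa using h
  | succ n ih =>
    rw [Function.iterate_succ_apply]
    exact ih _ (totalDegree_pderiv_le i p (by omega))

lemma iter_kill (i : Fin 2) {n k : ℕ} (p : MvPolynomial (Fin 2) ℝ)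
    (h : p.totalDegree ≤ n) (hk : n < k) : (pderiv i)^[k] p = 0 := by
  obtain ⟨j, rfl⟩ : ∃ j, k = j + (n + 1) := ⟨k - (n + 1), by omega⟩
  rw [Function.iterate_add_apply, Function.iterate_succ_apply']
  have hdeg : ((pderiv i)^[n] p).totalDegree ≤ 0 := iter_deg i n p 0 (by omega)
  have hC : (pderiv i)^[n] p = C (coeff 0 ((pderiv i)^[n] p)) :=
    eq_C_of_totalDegree_zero (Nat.le_zero.mp hdeg)
  rw [hC, pderiv_C, iter_zero]

lemma comm_iter (n : ℕ) (p : MvPolynomial (Fin 2) ℝ) :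
    pderiv 0 ((pderiv 1)^[n] p) = (pderiv 1)^[n] (pderiv 0 p) := by
  induction n generalizing p with
  | zero => rfl
  | succ n ih =>
    rw [Function.iterate_succ_apply, Function.iterate_succ_apply, ih, pderiv_comm']

lemma Dp_succ0 (γ : ℕ × ℕ) (p : MvPolynomial (Fin 2) ℝ) :
    Dp γ (pderiv 0 p) = Dp (γ.1 + 1, γ.2) p := by
  unfold Dp
  simp only
  rw [← comm_iter, ← Function.iterate_succ_apply]

lemma Dp_succ1 (γ : ℕ × ℕ) (p : MvPolynomial (Fin 2) ℝ) :
    Dp γ (pderiv 1 p) = Dp (γ.1, γ.2 + 1) p := by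
  unfold Dp
  simp only
  rw [← Function.iterate_succ_apply]

lemma Dp_kill {n : ℕ} (γ : ℕ × ℕ) (p : MvPolynomial (Fin 2) ℝ)
    (h : p.totalDegree ≤ n) (hk : n < γ.1 + γ.2) : Dp γ p = 0 := by
  unfold Dp
  rcases lt_or_ge n γ.2 with h2 | h2
  · rw [iter_kill 1 p h h2, iter_zero]
  · have hdeg : ((pderiv 1)^[γ.2] p).totalDegree ≤ n - γ.2 :=
      iter_deg 1 γ.2 p (n - γ.2) (by omega)
    exact iter_kill 0 _ hdeg (by omega)

/-! ### Evaluation and analysis -/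

def Ep (p : MvPolynomial (Fin 2) ℝ) : ℝ × ℝ → ℝ := fun x => eval ![x.1, x.2] p

@[simp] lemma Ep_C (a : ℝ) (x : ℝ × ℝ) : Ep (C a) x = a := by simp [Ep]
@[simp] lemma Ep_zero (x : ℝ × ℝ) : Ep 0 x = 0 := by simp [Ep]
@[simp] lemma Ep_add (p q : MvPolynomial (Fin 2) ℝ) (x : ℝ × ℝ) :
    Ep (p + q) x = Ep p x + Ep q x := by simp [Ep]
@[simp] lemma Ep_mul (p q : MvPolynomial (Fin 2) ℝ) (x : ℝ × ℝ) :
    Ep (p * q) x = Ep p x * Ep q x := by simp [Ep]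
@[simp] lemma Ep_smul (r : ℝ) (p : MvPolynomial (Fin 2) ℝ) (x : ℝ × ℝ) :
    Ep (r • p) x = r * Ep p x := by simp [Ep]
@[simp] lemma Ep_X0 (x : ℝ × ℝ) : Ep (X 0) x = x.1 := by simp [Ep]
@[simp] lemma Ep_X1 (x : ℝ × ℝ) : Ep (X 1) x = x.2 := by simp [Ep]

lemma hasFDerivAt_Ep (p : MvPolynomial (Fin 2) ℝ) (x : ℝ × ℝ) :
    HasFDerivAt (Ep p)
      (Ep (pderiv 0 p) x • ContinuousLinearMap.fst ℝ ℝ ℝ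
        + Ep (pderiv 1 p) x • ContinuousLinearMap.snd ℝ ℝ ℝ) x := by
  induction p using MvPolynomial.induction_on with
  | C a =>
    have : Ep (C a) = fun _ : ℝ × ℝ => a := funext fun y => by simp [Ep]
    rw [this]
    simp only [pderiv_C, Ep_zero, zero_smul, add_zero]
    exact hasFDerivAt_const a x
  | add p q hp hq =>
    have : Ep (p + q) = fun y => Ep p y + Ep q y := funext fun y => by simp [Ep]
    rw [this]
    have e0 : pderiv 0 (p + q) = pderiv 0 p + pderiv 0 q := map_add _ _ _
    have e1 : pderiv 1 (p + q) = pderiv 1 p + pderiv 1 q := map_add _ _ _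
    rw [e0, e1, Ep_add, Ep_add, add_smul, add_smul]
    refine ((hp).add (hq)).congr_fderiv ?_
    abel
  | mul_X p i hp =>
    have hi : i = 0 ∨ i = 1 := by
      fin_cases i
      · exact Or.inl rfl
      · exact Or.inr rfl
    rcases hi with rfl | rfl
    · have : Ep (p * X 0) = fun y : ℝ × ℝ => Ep p y * y.1 :=
        funext fun y => by simp
      rw [this]
      have hfst : HasFDerivAt (fun y : ℝ × ℝ => y.1)
          (ContinuousLinearMap.fst ℝ ℝ ℝ) x := hasFDerivAt_fst
      apply HasFDerivAt.congr_fderiv ((hp).mul hfst)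
      ext v <;>
        simp [pderiv_mul, pderiv_X_self, pderiv_X_of_ne, mul_comm]
    · have : Ep (p * X 1) = fun y : ℝ × ℝ => Ep p y * y.2 :=
        funext fun y => by simp
      rw [this]
      have hsnd : HasFDerivAt (fun y : ℝ × ℝ => y.2)
          (ContinuousLinearMap.snd ℝ ℝ ℝ) x := hasFDerivAt_snd
      apply HasFDerivAt.congr_fderiv ((hp).mul hsnd)
      ext v <;>
        simp [pderiv_mul, pderiv_X_self, pderiv_X_of_ne, mul_comm]

lemma pd1_Ep (p : MvPolynomial (Fin 2) ℝ) : pd1 (Ep p) = Ep (pderiv 0 p) := by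
  funext x
  rw [pd1, (hasFDerivAt_Ep p x).fderiv]
  simp

lemma pd2_Ep (p : MvPolynomial (Fin 2) ℝ) : pd2 (Ep p) = Ep (pderiv 1 p) := by
  funext x
  rw [pd2, (hasFDerivAt_Ep p x).fderiv]
  simp

lemma Dmulti_Ep (γ : ℕ × ℕ) (p : MvPolynomial (Fin 2) ℝ) :
    Dmulti γ (Ep p) = Ep (Dp γ p) := by
  obtain ⟨a, b⟩ := γ
  unfold Dmulti Dp
  simp only
  have h2 : ∀ n q, (pd2)^[n] (Ep q) = Ep ((pderiv 1)^[n] q) := by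
    intro n
    induction n with
    | zero => intro q; rfl
    | succ n ih =>
      intro q
      rw [Function.iterate_succ_apply, Function.iterate_succ_apply, pd2_Ep, ih]
  have h1 : ∀ n q, (pd1)^[n] (Ep q) = Ep ((pderiv 0)^[n] q) := by
    intro n
    induction n with
    | zero => intro q; rfl
    | succ n ih =>
      intro q
      rw [Function.iterate_succ_apply, Function.iterate_succ_apply, pd1_Ep, ih]
  rw [h2, h1]

lemma continuous_Ep (p : MvPolynomial (Fin 2) ℝ) : Continuous (Ep p) := by
  have : Differentiable ℝ (Ep p) := fun x => (hasFDerivAt_Ep p x).differentiableAt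
  exact this.continuous

/-! ### Averages over K -/

variable {K : Set (ℝ × ℝ)}

lemma integ (hKb : Bornology.IsBounded K) (p : MvPolynomial (Fin 2) ℝ) :
    IntegrableOn (Ep p) K := by
  have hc : IsCompact (closure K) := hKb.isCompact_closure
  exact ((continuous_Ep p).continuousOn.integrableOn_compact hc).mono_set
    subset_closure

def avgK (K : Set (ℝ × ℝ)) (p : MvPolynomial (Fin 2) ℝ) : ℝ :=
  (volume K).toReal⁻¹ * ∫ x in K, Ep p x

lemma avgK_add (hKb : Bornology.IsBounded K) (p q : MvPolynomial (Fin 2) ℝ) :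
    avgK K (p + q) = avgK K p + avgK K q := by
  unfold avgK
  rw [show (fun x => Ep (p + q) x) = fun x => Ep p x + Ep q x from
    funext fun x => by simp [Ep]]
  rw [integral_add (integ hKb p) (integ hKb q)]
  ring

lemma avgK_smul (r : ℝ) (p : MvPolynomial (Fin 2) ℝ) :
    avgK K (r • p) = r * avgK K p := by
  unfold avgK
  rw [show (fun x => Ep (r • p) x) = fun x => r * Ep p x from
    funext fun x => by simp [Ep]]
  rw [integral_const_mul]
  ring

lemma volK_ne_top (hKb : Bornology.IsBounded K) : volume K ≠ ⊤ :=
  fun h => absurd (lt_of_le_of_lt (measure_mono subset_closure)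
    hKb.isCompact_closure.measure_lt_top) (by rw [h]; simp)

lemma avgK_C (hKb : Bornology.IsBounded K) (hK0 : 0 < volume K) (c : ℝ) :
    avgK K (MvPolynomial.C c) = c := by
  unfold avgK
  rw [show (fun x => Ep (C c) x) = fun _ => c from funext fun x => by simp [Ep]]
  rw [setIntegral_const, smul_eq_mul, measureReal_def]
  have h1 : (volume K).toReal ≠ 0 :=
    ENNReal.toReal_ne_zero.mpr ⟨hK0.ne', volK_ne_top hKb⟩
  field_simp

/-! ### Injectivity of the moment map -/

lemma inj_claim (hKb : Bornology.IsBounded K) (hK0 : 0 < volume K) :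
    ∀ m (p : MvPolynomial (Fin 2) ℝ), p.totalDegree ≤ m →
      (∀ γ : ℕ × ℕ, γ.1 + γ.2 ≤ m → avgK K (Dp γ p) = 0) → p = 0 := by
  intro m
  induction m with
  | zero =>
    intro p hdeg havg
    have hC : p = C (coeff 0 p) := eq_C_of_totalDegree_zero (Nat.le_zero.mp hdeg)
    have h0 := havg (0, 0) (by simp)
    rw [show Dp (0, 0) p = p from rfl, hC, avgK_C hKb hK0] at h0
    rw [hC, h0, map_zero]
  | succ m ih =>
    intro p hdeg havg
    have hp0 : pderiv 0 p = 0 := by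
      apply ih _ (totalDegree_pderiv_le 0 p hdeg)
      intro γ hγ
      rw [Dp_succ0]
      exact havg (γ.1 + 1, γ.2) (by simp; omega)
    have hp1 : pderiv 1 p = 0 := by
      apply ih _ (totalDegree_pderiv_le 1 p hdeg)
      intro γ hγ
      rw [Dp_succ1]
      exact havg (γ.1, γ.2 + 1) (by simp; omega)
    have hC : p = C (coeff 0 p) := eq_C_of_pderiv_zero hp0 hp1
    have h0 := havg (0, 0) (by simp)
    rw [show Dp (0, 0) p = p from rfl, hC, avgK_C hKb hK0] at h0
    rw [hC, h0, map_zero]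

/-! ### The finite index type and linear maps -/

instance instFin (m : ℕ) : Finite {β : ℕ × ℕ // β.1 + β.2 ≤ m} := by
  apply Finite.of_injective
    (f := fun β : {β : ℕ × ℕ // β.1 + β.2 ≤ m} =>
      ((⟨β.1.1, by omega⟩ : Fin (m + 1)), (⟨β.1.2, by omega⟩ : Fin (m + 1))))
  intro a b h
  apply Subtype.ext
  apply Prod.ext
  · exact congrArg (fun t : Fin (m+1) × Fin (m+1) => (t.1 : ℕ)) h
  · exact congrArg (fun t : Fin (m+1) × Fin (m+1) => (t.2 : ℕ)) h

instance instFintype (m : ℕ) : Fintype {β : ℕ × ℕ // β.1 + β.2 ≤ m} :=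
  Fintype.ofFinite _

def Pm (m : ℕ) : ({β : ℕ × ℕ // β.1 + β.2 ≤ m} → ℝ) →ₗ[ℝ] MvPolynomial (Fin 2) ℝ where
  toFun c := ∑ β : {β : ℕ × ℕ // β.1 + β.2 ≤ m}, c β • monomial (tf β.1) (1 : ℝ)
  map_add' a b := by
    simp [add_smul, Finset.sum_add_distrib]
  map_smul' r a := by
    simp [Finset.smul_sum, smul_smul]

lemma coeff_Pm {m : ℕ} (c : {β : ℕ × ℕ // β.1 + β.2 ≤ m} → ℝ)
    (β : {β : ℕ × ℕ // β.1 + β.2 ≤ m}) :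
    coeff (tf β.1) (Pm m c) = c β := by
  classical
  rw [show Pm m c = ∑ b : {β : ℕ × ℕ // β.1 + β.2 ≤ m},
      c b • monomial (tf b.1) (1 : ℝ) from rfl]
  rw [coeff_sum]
  rw [Finset.sum_eq_single β]
  · simp [coeff_monomial]
  · intro b _ hb
    have hne : tf b.1 ≠ tf β.1 := fun h => hb (Subtype.ext (tf_inj h))
    simp [coeff_monomial, hne]
  · intro h
    exact absurd (Finset.mem_univ β) h

lemma Pm_deg {m : ℕ} (c : {β : ℕ × ℕ // β.1 + β.2 ≤ m} → ℝ) :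
    (Pm m c).totalDegree ≤ m := by
  rw [show Pm m c = ∑ b : {β : ℕ × ℕ // β.1 + β.2 ≤ m},
      c b • monomial (tf b.1) (1 : ℝ) from rfl]
  refine (totalDegree_finset_sum _ _).trans ?_
  apply Finset.sup_le
  intro b _
  refine (totalDegree_smul_le _ _).trans ?_
  refine (totalDegree_monomial_le _ _).trans ?_
  exact le_trans (le_of_eq (tf_sum b.1)) b.2

lemma Pm_repr {m : ℕ} (q : MvPolynomial (Fin 2) ℝ) (hq : q.totalDegree ≤ m) :
    Pm m (fun β => coeff (tf β.1) q) = q := by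
  classical
  apply MvPolynomial.ext
  intro d
  by_cases hd : d 0 + d 1 ≤ m
  · have : d = tf ((d 0, d 1)) := (tf_surj d).symm
    conv_lhs => rw [this]
    conv_rhs => rw [this]
    exact coeff_Pm _ ⟨(d 0, d 1), hd⟩
  · have hql : coeff d q = 0 := by
      by_contra hc
      have := le_totalDegree (p := q) (mem_support_iff.mpr hc)
      rw [sum_eq] at this
      omega
    rw [hql]
    rw [show Pm m (fun β => coeff (tf β.1) q) = ∑ b : {β : ℕ × ℕ // β.1 + β.2 ≤ m},
        coeff (tf b.1) q • monomial (tf b.1) (1 : ℝ) from rfl]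
    rw [coeff_sum]
    apply Finset.sum_eq_zero
    intro b _
    have hne : tf b.1 ≠ d := by
      intro h
      have hs := congrArg (fun t : Fin 2 →₀ ℕ => t 0) h
      have hs1 := congrArg (fun t : Fin 2 →₀ ℕ => t 1) h
      simp only [tf_apply0, tf_apply1] at hs hs1
      have := b.2
      omega
    simp [coeff_monomial, hne]

def Tm (K : Set (ℝ × ℝ)) (hKb : Bornology.IsBounded K) (m : ℕ) :
    ({β : ℕ × ℕ // β.1 + β.2 ≤ m} → ℝ) →ₗ[ℝ] ({β : ℕ × ℕ // β.1 + β.2 ≤ m} → ℝ) where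
  toFun c := fun γ => avgK K (Dp γ.1 (Pm m c))
  map_add' a b := by
    funext γ
    simp only [map_add, Dp_add, Pi.add_apply]
    rw [avgK_add hKb]
  map_smul' r a := by
    funext γ
    simp only [Pi.smul_apply, RingHom.id_apply, smul_eq_mul]
    rw [show Pm m (r • a) = r • Pm m a from _root_.map_smul _ _ _, Dp_smul, avgK_smul]

lemma Tm_surjective (hKb : Bornology.IsBounded K) (hK0 : 0 < volume K) (m : ℕ) :
    Function.Surjective (Tm K hKb m) := by
  rw [← LinearMap.injective_iff_surjective]
  intro a b hab
  have hker : Tm K hKb m (a - b) = 0 := by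
    rw [map_sub, hab, sub_self]
  have hP : Pm m (a - b) = 0 := by
    apply inj_claim hKb hK0 m _ (Pm_deg _)
    intro γ hγ
    have := congrFun hker ⟨γ, hγ⟩
    simpa [Tm] using this
  have : a - b = 0 := by
    funext β
    have := coeff_Pm (a - b) β
    rw [hP] at this
    simpa using this.symm
  exact sub_eq_zero.mp this

lemma Tm_apply (hKb : Bornology.IsBounded K) (m : ℕ)
    (c : {β : ℕ × ℕ // β.1 + β.2 ≤ m} → ℝ) (γ : {β : ℕ × ℕ // β.1 + β.2 ≤ m}) :
    Tm K hKb m c γ = avgK K (Dp γ.1 (Pm m c)) := rfl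

end DualBasisAux

open PaperStmt in
/-- Existence and uniqueness of the family `(φ_α)_{|α| ≤ l}` of polynomials with
`deg φ_α ≤ |α|` and `(1/|K|) ∫_K D^γ φ_α dx = δ_{αγ}` for all `|α|, |γ| ≤ l`. -/
theorem exists_unique_dual_basis
    (K : Set (ℝ × ℝ)) (hKb : Bornology.IsBounded K) (hKm : MeasurableSet K)
    (hK0 : 0 < volume K) (l : ℕ) :
    ∃! φ : {α : ℕ × ℕ // α.1 + α.2 ≤ l} → ℝ × ℝ → ℝ,
      (∀ a : {α : ℕ × ℕ // α.1 + α.2 ≤ l}, IsPolyFun (a.1.1 + a.1.2) (φ a)) ∧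
      (∀ a : {α : ℕ × ℕ // α.1 + α.2 ≤ l}, ∀ γ : ℕ × ℕ, γ.1 + γ.2 ≤ l →
        (volume K).toReal⁻¹ * ∫ x in K, Dmulti γ (φ a) x =
          if a.1 = γ then 1 else 0) := by
  classical
  open DualBasisAux in
  have hsol : ∀ a : {α : ℕ × ℕ // α.1 + α.2 ≤ l},
      ∃ c : {β : ℕ × ℕ // β.1 + β.2 ≤ a.1.1 + a.1.2} → ℝ,
        Tm K hKb (a.1.1 + a.1.2) c = fun γ => if a.1 = γ.1 then 1 else 0 :=
    fun a => Tm_surjective hKb hK0 _ _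
  choose c hc using hsol
  refine ⟨fun a => DualBasisAux.Ep (DualBasisAux.Pm _ (c a)), ⟨?_, ?_⟩, ?_⟩
  · intro a
    exact ⟨DualBasisAux.Pm _ (c a), DualBasisAux.Pm_deg _, fun x => rfl⟩
  · intro a γ hγ
    rw [DualBasisAux.Dmulti_Ep]
    by_cases hle : γ.1 + γ.2 ≤ a.1.1 + a.1.2
    · have hthis := congrFun (hc a) ⟨γ, hle⟩
      rw [DualBasisAux.Tm_apply] at hthis
      simpa [DualBasisAux.avgK] using hthis
    · have hz : DualBasisAux.Dp γ (DualBasisAux.Pm _ (c a)) = 0 :=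
        DualBasisAux.Dp_kill γ _ (DualBasisAux.Pm_deg _) (by omega)
      rw [hz]
      have hne : a.1 ≠ γ := by
        intro h
        apply hle
        rw [← h]
      rw [if_neg hne]
      simp [DualBasisAux.Ep]
  · intro ψ hψ
    funext a
    obtain ⟨q', hq'deg, hq'x⟩ := hψ.1 a
    have hψa : ψ a = DualBasisAux.Ep q' := funext fun x => hq'x x
    have hrepr : DualBasisAux.Pm (a.1.1 + a.1.2)
        (fun β => MvPolynomial.coeff (DualBasisAux.tf β.1) q') = q' :=
      DualBasisAux.Pm_repr q' hq'deg
    have hTc' : DualBasisAux.Tm K hKb (a.1.1 + a.1.2)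
        (fun β => MvPolynomial.coeff (DualBasisAux.tf β.1) q')
        = fun γ => if a.1 = γ.1 then 1 else 0 := by
      funext γ
      have h2 := hψ.2 a γ.1 (by have := γ.2; have := a.2; omega)
      rw [hψa, DualBasisAux.Dmulti_Ep] at h2
      rw [DualBasisAux.Tm_apply, hrepr]
      exact h2
    have hinj : Function.Injective (DualBasisAux.Tm K hKb (a.1.1 + a.1.2)) :=
      (LinearMap.injective_iff_surjective).mpr (Tm_surjective hKb hK0 _)
    have hceq : (fun β => MvPolynomial.coeff (DualBasisAux.tf β.1) q') = c a :=
      hinj (by rw [hTc', hc a])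
    rw [hψa, ← hrepr, hceq]
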